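/- Under ignorability, for any measurable function q(x) with 0 < ζ₁ ≤ q(X) ≤ ζ₂ < 1 a.s. (not necessarily the true propensity score), if μ₁(x) = E[Y(1)|X=x], then E[ A·Y/q(X) − (A − q(X))/q(X) · μ₁(X) ] = E[Y(1)]. That is, the AIPW functional is unbiased for E[Y(1)] when the outcome model is correctly specified, even if the propensity model is misspecified. -/

import Mathlib

open MeasureTheory ProbabilityTheory MeasurableSpace Set

/-- Conditional expectation of a product of conditionally independent functions,
one of which is `{0,1}`-valued. -/
lemma condexp_mul_of_condIndepFun_binary
    {Ω 𝓧 : Type*} [mΩ : MeasurableSpace Ω] [StandardBorelSpace Ω] [Nonempty Ω]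
    {m𝓧 : MeasurableSpace 𝓧} (X : Ω → 𝓧) (hX : Measurable X)
    (μ : Measure Ω) [IsProbabilityMeasure μ]
    {f g : Ω → ℝ} (hf : Measurable f) (hg : Measurable g)
    (hindep : CondIndepFun (m𝓧.comap X) hX.comap_le f g μ)
    (hfint : Integrable f μ)
    (hgbin : ∀ ω, g ω = 0 ∨ g ω = 1)
    (hfg : Integrable (fun ω => f ω * g ω) μ) :
    μ[fun ω => f ω * g ω | m𝓧.comap X]
      =ᵐ[μ] fun ω => (μ[f|m𝓧.comap X]) ω * (μ[g|m𝓧.comap X]) ω := by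
  have hm : m𝓧.comap X ≤ mΩ := hX.comap_le
  set κ := condExpKernel μ (m𝓧.comap X) with hκ
  set T : Set Ω := g ⁻¹' {1} with hT
  have hTmeas : MeasurableSet T := hg (measurableSet_singleton 1)
  have hgabs : ∀ ω, ‖g ω‖ ≤ 1 := by
    intro ω; rcases hgbin ω with h | h <;> simp [h]
  have hgint : Integrable g μ :=
    (integrable_const (1 : ℝ)).mono' hg.aestronglyMeasurable (Filter.Eventually.of_forall hgabs)
  -- pointwise a.e. independence under the conditional kernel
  have hsets : ∀ p : ℚ, ∀ᵐ ω ∂μ,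
      κ ω (f ⁻¹' Iic (p : ℝ) ∩ T) = κ ω (f ⁻¹' Iic (p : ℝ)) * κ ω T := by
    intro p
    refine ae_of_ae_trim hm ?_
    exact hindep _ _ ⟨Iic (p : ℝ), measurableSet_Iic, rfl⟩ ⟨{1}, measurableSet_singleton 1, rfl⟩
  have hae : ∀ᵐ ω ∂μ, IndepFun f g (κ ω) := by
    filter_upwards [ae_all_iff.2 hsets] with ω hω
    have hprob : IsProbabilityMeasure (κ ω) := inferInstance
    set P1 : Set (Set Ω) := {s | ∃ p : ℚ, s = f ⁻¹' Iic (p : ℝ)} with hP1def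
    have hP1 : IndepSets P1 {T} (κ ω) := by
      rintro s t ⟨p, rfl⟩ ht
      rw [Set.mem_singleton_iff] at ht
      subst ht
      exact Filter.Eventually.of_forall fun _ => hω p
    have hpi1 : IsPiSystem P1 := by
      rintro s ⟨p, rfl⟩ t ⟨r, rfl⟩ -
      exact ⟨min p r, by rw [Rat.cast_min, ← Set.Iic_inter_Iic, Set.preimage_inter]⟩
    have hind : Indep (generateFrom P1) (generateFrom {T}) (κ ω) :=
      IndepSets.indep' (by rintro s ⟨p, rfl⟩; exact hf measurableSet_Iic)
        (by rintro t ht; rw [Set.mem_singleton_iff] at ht; subst ht; exact hTmeas)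
        hpi1 (IsPiSystem.singleton T) hP1
    have hle1 : MeasurableSpace.comap f inferInstance ≤ generateFrom P1 := by
      rw [show (inferInstance : MeasurableSpace ℝ) = borel ℝ from BorelSpace.measurable_eq,
        Real.borel_eq_generateFrom_Iic_rat, MeasurableSpace.comap_generateFrom]
      refine generateFrom_le ?_
      rintro t ⟨s, hs, rfl⟩
      simp only [Set.mem_iUnion, Set.mem_singleton_iff] at hs
      obtain ⟨p, rfl⟩ := hs
      exact measurableSet_generateFrom ⟨p, rfl⟩
    have hle2 : MeasurableSpace.comap g inferInstance ≤ generateFrom {T} := by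
      rintro t ⟨s, hs, rfl⟩
      by_cases h1 : (1 : ℝ) ∈ s <;> by_cases h0 : (0 : ℝ) ∈ s
      · have : g ⁻¹' s = Set.univ := by
          ext ω'; rcases hgbin ω' with h | h <;> simp [h, h0, h1]
        rw [this]; exact @MeasurableSet.univ Ω (MeasurableSpace.generateFrom {T})
      · have : g ⁻¹' s = T := by
          ext ω'; rcases hgbin ω' with h | h <;> simp [hT, h, h0, h1]
        rw [this]; exact measurableSet_generateFrom (Set.mem_singleton T)
      · have : g ⁻¹' s = Tᶜ := by
          ext ω'; rcases hgbin ω' with h | h <;> simp [hT, h, h0, h1]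
        rw [this]; exact MeasurableSet.compl (measurableSet_generateFrom (Set.mem_singleton T))
      · have : g ⁻¹' s = ∅ := by
          ext ω'; rcases hgbin ω' with h | h <;> simp [h, h0, h1]
        rw [this]; exact @MeasurableSet.empty Ω (MeasurableSpace.generateFrom {T})
    exact indep_of_indep_of_le_left (indep_of_indep_of_le_right hind hle2) hle1
  have h1 : ∀ᵐ ω ∂μ, Integrable f (κ ω) := hfint.condExpKernel_ae
  have h2 : ∀ ω, Integrable g (κ ω) := by
    intro ω
    have : IsProbabilityMeasure (κ ω) := inferInstance
    exact (integrable_const (1 : ℝ)).mono' hg.aestronglyMeasurable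
      (Filter.Eventually.of_forall hgabs)
  have h3 := condExp_ae_eq_integral_condExpKernel hm hfg
  have h4 := condExp_ae_eq_integral_condExpKernel hm hfint
  have h5 := condExp_ae_eq_integral_condExpKernel hm hgint
  filter_upwards [hae, h1, h3, h4, h5] with ω hω hif e3 e4 e5
  rw [e3, e4, e5]
  exact hω.integral_fun_mul_eq_mul_integral hif.aestronglyMeasurable (h2 ω).aestronglyMeasurable


open MeasureTheory ProbabilityTheory

/-- Double robustness in the outcome-model direction: under ignorability, for any
measurable `q` bounded in `[ζ₁,ζ₂] ⊂ (0,1)` (not necessarily the true propensity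
score), if `μ₁(x) = E[Y(1)|X=x]`, then the AIPW functional is unbiased for
`E[Y(1)]`. -/
theorem aipw_unbiased_correct_outcome
    {Ω 𝓧 : Type*} [MeasurableSpace Ω] [StandardBorelSpace Ω] [Nonempty Ω]
    {m𝓧 : MeasurableSpace 𝓧}
    (μ : Measure Ω) [IsProbabilityMeasure μ]
    (X : Ω → 𝓧) (A Y0 Y1 : Ω → ℝ)
    (hX : Measurable X) (hA : Measurable A) (hY0 : Measurable Y0) (hY1 : Measurable Y1)
    (hAbin : ∀ ω, A ω = 0 ∨ A ω = 1)
    (hignor : CondIndepFun (m𝓧.comap X) (hX.comap_le)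
        (fun ω => (Y0 ω, Y1 ω)) A μ)
    (q : 𝓧 → ℝ) (hq : Measurable q)
    (ζ1 ζ2 : ℝ) (hζ1 : 0 < ζ1) (hζ12 : ζ1 ≤ ζ2) (hζ2 : ζ2 < 1)
    (hqbdd : ∀ᵐ ω ∂μ, ζ1 ≤ q (X ω) ∧ q (X ω) ≤ ζ2)
    (μ1 : 𝓧 → ℝ) (hμ1meas : Measurable μ1)
    (hμ1 : (fun ω => μ1 (X ω)) =ᵐ[μ] μ[Y1 | m𝓧.comap X])
    (Y : Ω → ℝ) (hYdef : ∀ ω, Y ω = A ω * Y1 ω + (1 - A ω) * Y0 ω)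
    (hint0 : Integrable Y0 μ) (hint1 : Integrable Y1 μ)
    (hint2 : Integrable
      (fun ω => A ω * Y ω / q (X ω) - (A ω - q (X ω)) / q (X ω) * μ1 (X ω)) μ)
    (hint3 : Integrable (fun ω => μ1 (X ω)) μ) :
    ∫ ω, (A ω * Y ω / q (X ω) - (A ω - q (X ω)) / q (X ω) * μ1 (X ω)) ∂μ
      = ∫ ω, Y1 ω ∂μ := by
  have hm : m𝓧.comap X ≤ ‹MeasurableSpace Ω› := hX.comap_le
  have hXc : Measurable[m𝓧.comap X] X := fun s hs => ⟨s, hs, rfl⟩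
  -- conditional independence of Y1 and A given X
  have hY1A : CondIndepFun (m𝓧.comap X) hX.comap_le Y1 A μ :=
    hignor.comp (measurable_snd : Measurable (Prod.snd : ℝ × ℝ → ℝ)) measurable_id
  have hAabs : ∀ ω, ‖A ω‖ ≤ 1 := by intro ω; rcases hAbin ω with h | h <;> simp [h]
  have hAint : Integrable A μ :=
    (integrable_const (1 : ℝ)).mono' hA.aestronglyMeasurable (Filter.Eventually.of_forall hAabs)
  have hμ1Xmeas : Measurable (fun ω => μ1 (X ω)) := hμ1meas.comp hX
  have hZmeas : Measurable (fun ω => A ω * (Y1 ω - μ1 (X ω))) :=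
    hA.mul (hY1.sub hμ1Xmeas)
  have hZint : Integrable (fun ω => A ω * (Y1 ω - μ1 (X ω))) μ := by
    refine (hint1.abs.add hint3.abs).mono' hZmeas.aestronglyMeasurable
      (Filter.Eventually.of_forall fun ω => ?_)
    rcases hAbin ω with h | h
    · simp [h]
      positivity
    · simp only [h, one_mul, Real.norm_eq_abs]
      exact (abs_sub _ _).trans le_rfl
  have hAY1int : Integrable (fun ω => Y1 ω * A ω) μ := by
    refine hint1.abs.mono' (hY1.mul hA).aestronglyMeasurable
      (Filter.Eventually.of_forall fun ω => ?_)
    rcases hAbin ω with h | h <;> simp [h, abs_nonneg]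
  have hμAint : Integrable (fun ω => μ1 (X ω) * A ω) μ := by
    refine hint3.abs.mono' (hμ1Xmeas.mul hA).aestronglyMeasurable
      (Filter.Eventually.of_forall fun ω => ?_)
    rcases hAbin ω with h | h <;> simp [h, abs_nonneg]
  -- a.e. pointwise algebraic identity
  have hptw : (fun ω => A ω * Y ω / q (X ω) - (A ω - q (X ω)) / q (X ω) * μ1 (X ω))
      =ᵐ[μ] fun ω => (q (X ω))⁻¹ * (A ω * (Y1 ω - μ1 (X ω))) + μ1 (X ω) := by
    filter_upwards [hqbdd] with ω hω
    have hq0 : q (X ω) ≠ 0 := (lt_of_lt_of_le hζ1 hω.1).ne'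
    rcases hAbin ω with h | h <;> rw [hYdef ω] <;> simp only [h] <;> field_simp <;> ring
  have hWZint : Integrable (fun ω => (q (X ω))⁻¹ * (A ω * (Y1 ω - μ1 (X ω)))) μ := by
    have hG : Integrable
        (fun ω => (q (X ω))⁻¹ * (A ω * (Y1 ω - μ1 (X ω))) + μ1 (X ω)) μ :=
      (integrable_congr hptw).mp hint2
    refine (hG.sub hint3).congr (Filter.Eventually.of_forall fun ω => ?_)
    simp
  -- strongly measurable factors w.r.t. the comap σ-algebra
  have hWsm : StronglyMeasurable[m𝓧.comap X] (fun ω => (q (X ω))⁻¹) :=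
    (Measurable.comp (hq.inv) hXc).stronglyMeasurable
  have hμ1sm : StronglyMeasurable[m𝓧.comap X] (fun ω => μ1 (X ω)) :=
    (Measurable.comp hμ1meas hXc).stronglyMeasurable
  -- conditional expectation of the product term vanishes
  have hprod := condexp_mul_of_condIndepFun_binary X hX μ hY1 hA hY1A hint1 hAbin hAY1int
  have hpull : μ[fun ω => μ1 (X ω) * A ω | m𝓧.comap X]
      =ᵐ[μ] fun ω => μ1 (X ω) * (μ[A | m𝓧.comap X]) ω := by
    have h := condExp_mul_of_stronglyMeasurable_left hμ1sm
      (show Integrable ((fun ω => μ1 (X ω)) * A) μ from hμAint) hAint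
    exact h
  have hZcond : μ[fun ω => A ω * (Y1 ω - μ1 (X ω)) | m𝓧.comap X] =ᵐ[μ] 0 := by
    have hsub : (fun ω => A ω * (Y1 ω - μ1 (X ω)))
        = (fun ω => Y1 ω * A ω) - (fun ω => μ1 (X ω) * A ω) := by
      funext ω; simp; ring
    rw [hsub]
    have h1 := condExp_sub (m := m𝓧.comap X) (μ := μ) hAY1int hμAint
    refine h1.trans ?_
    have h2 : (fun ω => (μ[Y1 | m𝓧.comap X]) ω * (μ[A | m𝓧.comap X]) ω)
        =ᵐ[μ] fun ω => μ1 (X ω) * (μ[A | m𝓧.comap X]) ω := by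
      filter_upwards [hμ1] with ω hω
      rw [← hω]
    filter_upwards [hprod, hpull, h2] with ω e1 e2 e3
    simp only [Pi.sub_apply, Pi.zero_apply]
    rw [e1, e2, e3]
    ring
  have hWmul := condExp_mul_of_stronglyMeasurable_left hWsm
    (show Integrable ((fun ω => (q (X ω))⁻¹) * fun ω => A ω * (Y1 ω - μ1 (X ω))) μ from hWZint)
    hZint
  have hWZcond : μ[fun ω => (q (X ω))⁻¹ * (A ω * (Y1 ω - μ1 (X ω))) | m𝓧.comap X]
      =ᵐ[μ] 0 := by
    refine hWmul.trans ?_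
    filter_upwards [hZcond] with ω hω
    simp only [Pi.mul_apply, Pi.zero_apply] at *
    rw [hω]
    ring
  have hWZzero : ∫ ω, (q (X ω))⁻¹ * (A ω * (Y1 ω - μ1 (X ω))) ∂μ = 0 := by
    rw [← integral_condExp hm (f := fun ω => (q (X ω))⁻¹ * (A ω * (Y1 ω - μ1 (X ω)))), integral_congr_ae hWZcond]
    simp
  calc ∫ ω, (A ω * Y ω / q (X ω) - (A ω - q (X ω)) / q (X ω) * μ1 (X ω)) ∂μ
      = ∫ ω, ((q (X ω))⁻¹ * (A ω * (Y1 ω - μ1 (X ω))) + μ1 (X ω)) ∂μ :=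
        integral_congr_ae hptw
    _ = (∫ ω, (q (X ω))⁻¹ * (A ω * (Y1 ω - μ1 (X ω))) ∂μ) + ∫ ω, μ1 (X ω) ∂μ :=
        integral_add hWZint hint3
    _ = ∫ ω, μ1 (X ω) ∂μ := by rw [hWZzero, zero_add]
    _ = ∫ ω, (μ[Y1 | m𝓧.comap X]) ω ∂μ := integral_congr_ae hμ1
    _ = ∫ ω, Y1 ω ∂μ := integral_condExp hm
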